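/- Let q be a real number with q > 1 and let m, N be integers with 1 ≤ m ≤ N. Then Σ_{i=1}^{m} (−1)^{m−i} · q^{(m−i)(m−i−1)/2} · [m−1 choose i−1]_q · (∏_{j=i+1}^{m} (q^j + 1)) · q^{2iN} = Σ_{ℓ=0}^{m} (−1)^{ℓ} · q^{ℓ(ℓ−1) + (m−ℓ)(m−ℓ−1)} · [m choose ℓ]_{q²} · ((q^{m−ℓ} − q^{ℓ})/(q^m − 1)) · ∏_{j=0}^{m−ℓ−1} (q^{2(N−j)} − 1). -/

import Mathlib

open Finset

/-- The Gaussian binomial coefficient `[n choose k]_q` for a real base `q`. -/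
noncomputable def gbinom (q : ℝ) (n k : ℕ) : ℝ :=
  ∏ j ∈ Finset.Icc 1 k, (q ^ (n - k + j) - 1) / (q ^ j - 1)

noncomputable def qfact (Q : ℝ) (n : ℕ) : ℝ := ∏ j ∈ Finset.Icc 1 n, (Q ^ j - 1)
noncomputable def pfact (q : ℝ) (n : ℕ) : ℝ := ∏ j ∈ Finset.Icc 1 n, (q ^ j + 1)

lemma qfact_pos {Q : ℝ} (hQ : 1 < Q) (n : ℕ) : 0 < qfact Q n := by
  refine Finset.prod_pos fun j hj => ?_
  have hj1 : 1 ≤ j := (Finset.mem_Icc.mp hj).1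
  have : (1:ℝ) < Q ^ j := one_lt_pow₀ hQ (by omega)
  linarith

lemma qfact_ne {Q : ℝ} (hQ : 1 < Q) (n : ℕ) : qfact Q n ≠ 0 := (qfact_pos hQ n).ne'

lemma pfact_pos {q : ℝ} (hq : 0 < q) (n : ℕ) : 0 < pfact q n := by
  refine Finset.prod_pos fun j hj => ?_
  have : (0:ℝ) < q ^ j := pow_pos hq j
  linarith

lemma pfact_ne {q : ℝ} (hq : 0 < q) (n : ℕ) : pfact q n ≠ 0 := (pfact_pos hq n).ne'

lemma qfact_succ (Q : ℝ) (n : ℕ) : qfact Q (n+1) = qfact Q n * (Q ^ (n+1) - 1) :=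
  Finset.prod_Icc_succ_top (by omega) _

lemma pfact_succ (q : ℝ) (n : ℕ) : pfact q (n+1) = pfact q n * (q ^ (n+1) + 1) :=
  Finset.prod_Icc_succ_top (by omega) _

lemma prod_shift (f : ℕ → ℝ) (a b : ℕ) :
    ∏ j ∈ Icc 1 b, f (a + j) = ∏ j ∈ Icc (a+1) (a+b), f j := by
  rw [← Finset.map_add_left_Icc, Finset.prod_map]
  rfl

lemma qfact_split (Q : ℝ) {k n : ℕ} (h : k ≤ n) :
    qfact Q n = qfact Q k * ∏ j ∈ Icc (k+1) n, (Q ^ j - 1) := by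
  unfold qfact
  rw [Finset.Icc_add_one_left_eq_Ioc k n, ← zero_add (1:ℕ), Finset.Icc_add_one_left_eq_Ioc 0 n, Finset.Icc_add_one_left_eq_Ioc 0 k]
  exact (Finset.prod_Ioc_consecutive _ (Nat.zero_le k) h).symm

lemma pfact_split (q : ℝ) {k n : ℕ} (h : k ≤ n) :
    pfact q n = pfact q k * ∏ j ∈ Icc (k+1) n, (q ^ j + 1) := by
  unfold pfact
  rw [Finset.Icc_add_one_left_eq_Ioc k n, ← zero_add (1:ℕ), Finset.Icc_add_one_left_eq_Ioc 0 n, Finset.Icc_add_one_left_eq_Ioc 0 k]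
  exact (Finset.prod_Ioc_consecutive _ (Nat.zero_le k) h).symm

lemma gbinom_eq {Q : ℝ} (hQ : 1 < Q) {k n : ℕ} (h : k ≤ n) :
    gbinom Q n k = qfact Q n / (qfact Q k * qfact Q (n - k)) := by
  unfold gbinom
  rw [Finset.prod_div_distrib]
  have h1 : ∏ j ∈ Icc 1 k, (Q ^ (n - k + j) - 1) = ∏ j ∈ Icc (n-k+1) n, (Q ^ j - 1) := by
    have := prod_shift (fun j => Q ^ j - 1) (n - k) k
    simpa [Nat.sub_add_cancel h] using this
  rw [h1]
  have h2 : qfact Q n = qfact Q (n-k) * ∏ j ∈ Icc (n-k+1) n, (Q ^ j - 1) :=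
    qfact_split Q (Nat.sub_le n k)
  rw [h2, show (∏ j ∈ Icc 1 k, (Q ^ j - 1)) = qfact Q k from rfl]
  rw [mul_comm (qfact Q (n-k)) _, mul_div_assoc]
  rw [show qfact Q (n-k) / (qfact Q k * qfact Q (n-k)) = 1 / qfact Q k from by
    field_simp [qfact_ne hQ]]
  rw [mul_one_div]

lemma gbinom_zero (Q : ℝ) (n : ℕ) : gbinom Q n 0 = 1 := by simp [gbinom]

lemma gbinom_self {Q : ℝ} (hQ : 1 < Q) (n : ℕ) : gbinom Q n n = 1 := by
  rw [gbinom_eq hQ le_rfl]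
  simp [qfact]
  exact qfact_ne hQ n

lemma gbinom_symm {Q : ℝ} (hQ : 1 < Q) {k n : ℕ} (h : k ≤ n) :
    gbinom Q n (n - k) = gbinom Q n k := by
  rw [gbinom_eq hQ (Nat.sub_le n k), gbinom_eq hQ h, Nat.sub_sub_self h, mul_comm]

lemma pow_sub_one_ne {Q : ℝ} (hQ : 1 < Q) (j : ℕ) (hj : 1 ≤ j) : Q ^ j - 1 ≠ 0 := by
  have : (1:ℝ) < Q ^ j := one_lt_pow₀ hQ (by omega)
  intro hc; linarith

lemma pow_add_one_ne {q : ℝ} (hq : 0 < q) (j : ℕ) : q ^ j + 1 ≠ 0 := by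
  have : (0:ℝ) < q ^ j := pow_pos hq j
  intro hc; linarith

lemma pascal1 {Q : ℝ} (hQ : 1 < Q) {k n : ℕ} (h : k + 1 ≤ n) :
    gbinom Q (n+1) (k+1) = gbinom Q n k + Q ^ (k+1) * gbinom Q n (k+1) := by
  obtain ⟨d, rfl⟩ : ∃ d, n = k + 1 + d := ⟨n - (k+1), by omega⟩
  rw [gbinom_eq hQ (by omega), gbinom_eq hQ (by omega), gbinom_eq hQ (by omega)]
  have e1 : k + 1 + d + 1 - (k + 1) = d + 1 := by omega
  have e2 : k + 1 + d - k = d + 1 := by omega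
  have e3 : k + 1 + d - (k + 1) = d := by omega
  rw [e1, e2, e3]
  rw [show k+1+d+1 = (k+1+d)+1 from rfl, qfact_succ, qfact_succ Q d, qfact_succ Q k]
  field_simp [qfact_ne hQ, pow_sub_one_ne hQ (k+1) (by omega), pow_sub_one_ne hQ (d+1) (by omega),
    pow_sub_one_ne hQ (k+1+d+1) (by omega)]
  ring

lemma pascal2 {Q : ℝ} (hQ : 1 < Q) {k n : ℕ} (h : k + 1 ≤ n) :
    gbinom Q (n+1) (k+1) = Q ^ (n-k) * gbinom Q n k + gbinom Q n (k+1) := by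
  obtain ⟨d, rfl⟩ : ∃ d, n = k + 1 + d := ⟨n - (k+1), by omega⟩
  rw [gbinom_eq hQ (by omega), gbinom_eq hQ (by omega), gbinom_eq hQ (by omega)]
  have e1 : k + 1 + d + 1 - (k + 1) = d + 1 := by omega
  have e2 : k + 1 + d - k = d + 1 := by omega
  have e3 : k + 1 + d - (k + 1) = d := by omega
  have e4 : k + 1 + d - k = d + 1 := by omega
  rw [e1, e2, e3]
  rw [show k+1+d+1 = (k+1+d)+1 from rfl, qfact_succ, qfact_succ Q d, qfact_succ Q k]
  field_simp [qfact_ne hQ, pow_sub_one_ne hQ (k+1) (by omega), pow_sub_one_ne hQ (d+1) (by omega),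
    pow_sub_one_ne hQ (k+1+d+1) (by omega)]
  ring

lemma trinom {Q : ℝ} (hQ : 1 < Q) {i l m : ℕ} (h : i + l ≤ m) :
    gbinom Q m l * gbinom Q (m-l) i = gbinom Q m i * gbinom Q (m-i) l := by
  obtain ⟨r, rfl⟩ : ∃ r, m = i + l + r := ⟨m - (i+l), by omega⟩
  rw [gbinom_eq hQ (by omega : l ≤ i+l+r), gbinom_eq hQ (by omega : i ≤ i+l+r),
      gbinom_eq hQ (show i ≤ i+l+r - l by omega), gbinom_eq hQ (show l ≤ i+l+r - i by omega)]
  have e1 : i + l + r - l = i + r := by omega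
  have e2 : i + l + r - i = l + r := by omega
  have e3 : i + r - i = r := by omega
  have e4 : l + r - l = r := by omega
  rw [e1, e2, e3, e4]
  field_simp [qfact_ne hQ]

lemma qfact_sq (q : ℝ) (n : ℕ) : qfact (q^2) n = qfact q n * pfact q n := by
  unfold qfact pfact
  rw [← Finset.prod_mul_distrib]
  refine Finset.prod_congr rfl fun j _ => ?_
  rw [← pow_mul, mul_comm 2 j, pow_mul]
  ring

lemma star {q : ℝ} (hq : 1 < q) {i m : ℕ} (h1 : 1 ≤ i) (h2 : i ≤ m) :
    gbinom (q^2) m i * (q^i - 1) * pfact q (m-i) =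
      (q^m - 1) * gbinom q (m-1) (i-1) * ∏ j ∈ Icc (i+1) m, (q^j + 1) := by
  have hq0 : 0 < q := lt_trans one_pos hq
  have hx : (1:ℝ) < q^2 := by nlinarith
  obtain ⟨i', rfl⟩ : ∃ i', i = i' + 1 := ⟨i - 1, by omega⟩
  obtain ⟨n, rfl⟩ : ∃ n, m = i' + 1 + n := ⟨m - (i'+1), by omega⟩
  have e1 : i' + 1 + n - (i' + 1) = n := by omega
  have e2 : i' + 1 + n - 1 = i' + n := by omega
  have e3 : i' + 1 - 1 = i' := by omega
  rw [e1, e2, e3]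
  rw [gbinom_eq hx (by omega : i'+1 ≤ i'+1+n), gbinom_eq hq (by omega : i' ≤ i'+n), e1,
      show i' + n - i' = n from by omega]
  have hp : ∏ j ∈ Icc (i'+1+1) (i'+1+n), (q^j + 1) = pfact q (i'+1+n) / pfact q (i'+1) := by
    rw [pfact_split q (show i'+1 ≤ i'+1+n by omega)]
    field_simp [pfact_ne hq0]
  rw [hp]
  rw [qfact_sq, qfact_sq, qfact_sq]
  rw [show i'+1+n = (i'+n)+1 from by omega, qfact_succ, pfact_succ, qfact_succ q i', pfact_succ q i']
  rw [show i'+n+1 = i'+1+n from by omega]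
  field_simp [qfact_ne hq, qfact_ne hx, pfact_ne hq0,
    pow_sub_one_ne hq (i'+1) (by omega), pow_sub_one_ne hx (i'+1) (by omega),
    pow_sub_one_ne hq (i'+n+1) (by omega), pow_sub_one_ne hx (i'+n+1) (by omega),
    pow_add_one_ne hq0 (i'+1), pow_add_one_ne hq0 (i'+n+1)]

lemma helper1 {Q : ℝ} (hQ : 1 < Q) (f : ℕ → ℝ) (n : ℕ) :
    ∑ l ∈ range (n+2), f l * gbinom Q (n+1) l =
      ∑ l ∈ range (n+1), f (l+1) * gbinom Q n l
        + ∑ l ∈ range (n+1), f l * Q ^ l * gbinom Q n l := by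
  rw [Finset.sum_range_succ (fun l => f l * gbinom Q (n+1) l) (n+1)]
  rw [Finset.sum_range_succ' (fun l => f l * gbinom Q (n+1) l) n]
  have hmid : ∀ l ∈ range n, f (l+1) * gbinom Q (n+1) (l+1)
      = f (l+1) * gbinom Q n l + f (l+1) * Q^(l+1) * gbinom Q n (l+1) := by
    intro l hl
    rw [pascal1 hQ (by simpa using Nat.succ_le_of_lt (mem_range.mp hl))]
    ring
  rw [Finset.sum_congr rfl hmid, Finset.sum_add_distrib]
  rw [Finset.sum_range_succ (fun l => f (l+1) * gbinom Q n l) n]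
  rw [Finset.sum_range_succ' (fun l => f l * Q ^ l * gbinom Q n l) n]
  simp only [gbinom_self hQ, gbinom_zero, pow_zero, Nat.sub_self, mul_one, one_mul]
  ring

lemma helper2 {Q : ℝ} (hQ : 1 < Q) (f : ℕ → ℝ) (n : ℕ) :
    ∑ l ∈ range (n+2), f l * gbinom Q (n+1) l =
      ∑ l ∈ range (n+1), f (l+1) * Q ^ (n-l) * gbinom Q n l
        + ∑ l ∈ range (n+1), f l * gbinom Q n l := by
  rw [Finset.sum_range_succ (fun l => f l * gbinom Q (n+1) l) (n+1)]
  rw [Finset.sum_range_succ' (fun l => f l * gbinom Q (n+1) l) n]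
  have hmid : ∀ l ∈ range n, f (l+1) * gbinom Q (n+1) (l+1)
      = f (l+1) * Q^(n-l) * gbinom Q n l + f (l+1) * gbinom Q n (l+1) := by
    intro l hl
    rw [pascal2 hQ (by simpa using Nat.succ_le_of_lt (mem_range.mp hl))]
    ring
  rw [Finset.sum_congr rfl hmid, Finset.sum_add_distrib]
  rw [Finset.sum_range_succ (fun l => f (l+1) * Q ^ (n-l) * gbinom Q n l) n]
  rw [Finset.sum_range_succ' (fun l => f l * gbinom Q n l) n]
  simp only [gbinom_self hQ, gbinom_zero, pow_zero, Nat.sub_self, mul_one, one_mul]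
  ring

def Ee (n l : ℕ) : ℕ := Nat.choose (n - 2*l) 2 + Nat.choose (2*l + 1 - n) 2

lemma choose2_succ (k : ℕ) : Nat.choose (k+1) 2 = Nat.choose k 2 + k := by
  rw [Nat.choose_succ_succ]
  simp [Nat.choose_one_right]
  omega

lemma L1 (n l : ℕ) : Ee (n+1) l + 2*l = Ee n l + n := by
  unfold Ee
  rcases le_or_gt (2*l) n with h | h
  · have e1 : n + 1 - 2*l = (n - 2*l) + 1 := by omega
    have e2 : 2*l + 1 - (n+1) = 0 := by omega
    have e3 : 2*l + 1 - n ≤ 1 := by omega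
    have e4 : Nat.choose (2*l+1-n) 2 = 0 := by
      interval_cases h : (2*l + 1 - n) <;> simp
    rw [e1, e2, e4, choose2_succ]
    simp [Nat.choose]
    omega
  · have e1 : n + 1 - 2*l = 0 := by omega
    have e2 : n - 2*l = 0 := by omega
    obtain ⟨j, hj⟩ : ∃ j, 2*l + 1 - n = j + 1 := ⟨2*l - n, by omega⟩
    have e3 : 2*l + 1 - (n+1) = j := by omega
    rw [e1, e2, e3, hj, choose2_succ]
    simp [Nat.choose]
    omega

lemma L2 (n l : ℕ) : Ee (n+1) (l+1) + (n+1) = Ee n l + 2*l + 2 := by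
  unfold Ee
  rcases le_or_gt (2*l + 2) n with h | h
  · obtain ⟨k, hk⟩ : ∃ k, n - (2*l+2) = k := ⟨n - (2*l+2), rfl⟩
    have e1 : n + 1 - 2*(l+1) = k + 1 := by omega
    have e2 : n - 2*l = k + 2 := by omega
    have e3 : 2*(l+1) + 1 - (n+1) = 0 := by omega
    have e4 : 2*l + 1 - n = 0 := by omega
    rw [e1, e2, e3, e4, choose2_succ, choose2_succ (k+1), choose2_succ k]
    simp [Nat.choose]
    omega
  · have e1 : n + 1 - 2*(l+1) = 0 := by omega
    have e2 : n - 2*l ≤ 1 := by omega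
    have e4 : Nat.choose (n - 2*l) 2 = 0 := by
      interval_cases h2 : (n - 2*l) <;> simp
    obtain ⟨j, hj⟩ : ∃ j, 2*l + 1 - n = j := ⟨2*l+1-n, rfl⟩
    have e3 : 2*(l+1) + 1 - (n+1) = j + 1 := by omega
    rw [e1, e3, e4, hj, choose2_succ]
    simp [Nat.choose]
    omega

lemma Ee_zero (n : ℕ) : Ee n 0 = Nat.choose n 2 := by
  unfold Ee
  have h0 : Nat.choose (2*0 + 1 - n) 2 = 0 := by
    rcases n with _ | n
    · simp [Nat.choose]
    · have : 2*0 + 1 - (n+1) ≤ 0 := by omega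
      have e : 2*0 + 1 - (n+1) = 0 := by omega
      rw [e]; simp
  rw [h0]
  simp

lemma Ee_self (n : ℕ) : Ee n n = Nat.choose (n+1) 2 := by
  unfold Ee
  have e1 : n - 2*n = 0 := by omega
  have e2 : 2*n + 1 - n = n + 1 := by omega
  rw [e1, e2]
  simp

noncomputable def Sc (q : ℝ) (n : ℕ) : ℝ := ∑ l ∈ range (n+1), q ^ (Ee n l) * gbinom (q^2) n l
noncomputable def Tc (q : ℝ) (n : ℕ) : ℝ := ∑ l ∈ range (n+1), q ^ (Ee n l + 2*l) * gbinom (q^2) n l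

lemma Sc_rec {q : ℝ} (hq : 1 < q) (n : ℕ) :
    q ^ (n+1) * Sc q (n+1) = q ^ (2*n+1) * Sc q n + q ^ 2 * Tc q n := by
  have hx : (1:ℝ) < q^2 := by nlinarith
  have h0 : q ^ (n+1) * Sc q (n+1)
      = ∑ l ∈ range (n+2), (fun l => q ^ (Ee (n+1) l + (n+1))) l * gbinom (q^2) (n+1) l := by
    rw [Sc, Finset.mul_sum]
    refine Finset.sum_congr rfl fun l _ => ?_
    rw [pow_add]; ring
  rw [h0, helper1 hx]
  rw [add_comm (q ^ (2*n+1) * Sc q n) (q^2 * Tc q n)]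
  congr 1
  · simp only [Tc, Finset.mul_sum]
    refine Finset.sum_congr rfl fun l _ => ?_
    rw [show Ee (n+1) (l+1) + (n+1) = Ee n l + 2*l + 2 from L2 n l, pow_add]
    ring
  · simp only [Sc, Finset.mul_sum]
    refine Finset.sum_congr rfl fun l _ => ?_
    rw [← pow_mul q 2 l,
      show q ^ (Ee (n+1) l + (n+1)) * q ^ (2*l) = q ^ (Ee n l + (2*n+1)) from by
        rw [← pow_add]; congr 1; have := L1 n l; omega,
      pow_add]
    ring

lemma Tc_rec {q : ℝ} (hq : 1 < q) (n : ℕ) :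
    Tc q (n+1) = q ^ n * Sc q n + q ^ (n+3) * Tc q n := by
  have hx : (1:ℝ) < q^2 := by nlinarith
  have h0 : Tc q (n+1)
      = ∑ l ∈ range (n+2), (fun l => q ^ (Ee (n+1) l + 2*l)) l * gbinom (q^2) (n+1) l := rfl
  rw [h0, helper2 hx]
  rw [add_comm (q ^ n * Sc q n) (q ^ (n+3) * Tc q n)]
  congr 1
  · simp only [Tc, Finset.mul_sum]
    refine Finset.sum_congr rfl fun l hl => ?_
    rw [← pow_mul q 2 (n-l),
      show q ^ (Ee (n+1) (l+1) + 2*(l+1)) * q ^ (2*(n-l)) = q ^ (Ee n l + 2*l + (n+3)) from by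
        rw [← pow_add]; congr 1
        have h2 := L2 n l
        have hln : l ≤ n := Nat.lt_succ_iff.mp (mem_range.mp hl)
        omega,
      pow_add]
    ring
  · simp only [Sc, Finset.mul_sum]
    refine Finset.sum_congr rfl fun l _ => ?_
    rw [show Ee (n+1) l + 2*l = Ee n l + n from L1 n l, pow_add]
    ring

lemma core {q : ℝ} (hq : 1 < q) (n : ℕ) :
    Sc q n = pfact q n ∧ q * Tc q n = q ^ n * (1 + q^(n+1) - q^n) * pfact q n := by
  have hq0 : (0:ℝ) < q := lt_trans one_pos hq
  have hqne : q ≠ 0 := hq0.ne'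
  induction n with
  | zero =>
    constructor
    · simp [Sc, Ee, pfact, gbinom_zero]
    · simp [Tc, Ee, pfact, gbinom_zero]
  | succ n ih =>
    obtain ⟨ihS, ihT⟩ := ih
    have hS : Sc q (n+1) = pfact q (n+1) := by
      have h1 : q ^ (n+1) * Sc q (n+1) = q ^ (n+1) * pfact q (n+1) := by
        rw [Sc_rec hq n, pfact_succ, ihS,
          show q ^ 2 * Tc q n = q * (q * Tc q n) from by ring, ihT]
        ring
      exact mul_left_cancel₀ (pow_ne_zero _ hqne) h1
    refine ⟨hS, ?_⟩
    rw [Tc_rec hq n, pfact_succ, ihS]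
    rw [mul_add, show q * (q ^ (n+3) * Tc q n) = q ^ (n+3) * (q * Tc q n) from by ring, ihT]
    ring

lemma Sc_eq {q : ℝ} (hq : 1 < q) (n : ℕ) : Sc q n = pfact q n := (core hq n).1

lemma Sc_eq' {q : ℝ} (hq : 1 < q) (n : ℕ) :
    ∑ l ∈ range (n+1), q ^ (Ee n l) * gbinom (q^2) n l = pfact q n := Sc_eq hq n

lemma two_choose (k : ℕ) : k * (k-1) = 2 * Nat.choose k 2 := by
  induction k with
  | zero => rfl
  | succ k ih =>
    rw [choose2_succ, Nat.add_sub_cancel, Nat.mul_add]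
    rcases k with _ | j
    · rfl
    · rw [Nat.add_sub_cancel] at ih
      rw [← ih]
      ring

lemma X2 (i l b c : ℕ) :
    (l*(l-1) + (i+b)*((i+b)-1)) + 2*(i*(l+c) + Nat.choose (i+1) 2) + 2*Nat.choose (l+b) 2 + l
      = Ee (l+b) l + (2*i*(i+l+b+c) + 3*Nat.choose (l+b) 2) := by
  rw [two_choose l, two_choose (i+b)]
  rcases le_or_gt l b with h | h
  · obtain ⟨s, rfl⟩ : ∃ s, b = l + s := ⟨b - l, by omega⟩
    have e1 : Ee (l+(l+s)) l = Nat.choose s 2 := by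
      unfold Ee
      have a1 : l + (l+s) - 2*l = s := by omega
      have a2 : Nat.choose (2*l+1-(l+(l+s))) 2 = 0 := Nat.choose_eq_zero_of_lt (by omega)
      rw [a1, a2, add_zero]
    rw [e1, ← Nat.cast_inj (R := ℚ)]
    push_cast [Nat.cast_choose_two]
    ring
  · obtain ⟨u, rfl⟩ : ∃ u, l = b + u + 1 := ⟨l - b - 1, by omega⟩
    have e1 : Ee (b+u+1+b) (b+u+1) = Nat.choose (u+2) 2 := by
      unfold Ee
      have a1 : b+u+1+b - 2*(b+u+1) = 0 := by omega
      have a2 : 2*(b+u+1)+1 - (b+u+1+b) = u + 2 := by omega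
      rw [a1, a2]
      simp
    rw [e1, ← Nat.cast_inj (R := ℚ)]
    push_cast [Nat.cast_choose_two]
    ring

lemma X1 (i l b c : ℕ) :
    (l*(l-1) + (i+b)*((i+b)-1)) + 2*(i*(l+c) + Nat.choose (i+1) 2) + 2*Nat.choose (l+b) 2 + (i+b)
      = Ee (l+b) b + (2*i*(i+l+b+c) + 3*Nat.choose (l+b) 2 + i) := by
  rw [two_choose l, two_choose (i+b)]
  rcases le_or_gt l b with h | h
  · obtain ⟨s, rfl⟩ : ∃ s, b = l + s := ⟨b - l, by omega⟩
    have e1 : Ee (l+(l+s)) (l+s) = Nat.choose (s+1) 2 := by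
      unfold Ee
      have a1 : l + (l+s) - 2*(l+s) = 0 := by omega
      have a2 : 2*(l+s)+1 - (l+(l+s)) = s + 1 := by omega
      rw [a1, a2]
      simp
    rw [e1, ← Nat.cast_inj (R := ℚ)]
    push_cast [Nat.cast_choose_two]
    ring
  · obtain ⟨u, rfl⟩ : ∃ u, l = b + u + 1 := ⟨l - b - 1, by omega⟩
    have e1 : Ee (b+u+1+b) b = Nat.choose (u+1) 2 := by
      unfold Ee
      have a1 : b+u+1+b - 2*b = u + 1 := by omega
      have a2 : Nat.choose (2*b+1-(b+u+1+b)) 2 = 0 := Nat.choose_eq_zero_of_lt (by omega)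
      rw [a1, a2, add_zero]
    rw [e1, ← Nat.cast_inj (R := ℚ)]
    push_cast [Nat.cast_choose_two]
    ring

lemma prodB {X : ℝ} (hX : 1 < X) (N : ℕ) :
    ∀ d : ℕ, d ≤ N → ∏ j ∈ range d, (X ^ (N - j) - 1) =
      ∑ i ∈ range (d+1), (-1:ℝ) ^ (d - i) * X ^ (i * (N - d) + Nat.choose (i+1) 2) * gbinom X d i := by
  intro d
  induction d with
  | zero => intro _; simp [gbinom_zero]
  | succ d ih =>
    intro hdN
    rw [Finset.prod_range_succ, ih (by omega)]
    set f : ℕ → ℝ := fun i => (-1:ℝ) ^ (d+1-i) * X ^ (i * (N - (d+1)) + Nat.choose (i+1) 2) with hf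
    have hrhs : ∑ i ∈ range (d+2), (-1:ℝ) ^ (d+1-i) * X ^ (i * (N - (d+1)) + Nat.choose (i+1) 2) * gbinom X (d+1) i
        = ∑ i ∈ range (d+2), f i * gbinom X (d+1) i := rfl
    rw [hrhs, helper1 hX]
    have e1 : ∀ i ∈ range (d+1), f (i+1) * gbinom X d i
        = ((-1:ℝ)^(d-i) * X^(i*(N-d) + Nat.choose (i+1) 2) * gbinom X d i) * X^(N-d) := by
      intro i hi
      have hid : i ≤ d := Nat.lt_succ_iff.mp (mem_range.mp hi)
      have hsign : ((-1:ℝ)) ^ (d+1-(i+1)) = (-1:ℝ) ^ (d-i) := by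
        congr 1; omega
      have hexp : (i+1) * (N - (d+1)) + Nat.choose (i+2) 2
          = (i*(N-d) + Nat.choose (i+1) 2) + (N-d) := by
        have h1 := choose2_succ (i+1)
        have h2 : N - d = (N - (d+1)) + 1 := by omega
        rw [h1, h2]
        ring_nf
      rw [hf]
      simp only []
      rw [hsign, hexp, pow_add]
      ring
    have e2 : ∀ i ∈ range (d+1), f i * X^i * gbinom X d i
        = -((-1:ℝ)^(d-i) * X^(i*(N-d) + Nat.choose (i+1) 2) * gbinom X d i) := by
      intro i hi
      have hid : i ≤ d := Nat.lt_succ_iff.mp (mem_range.mp hi)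
      have hsign : ((-1:ℝ)) ^ (d+1-i) = -((-1:ℝ) ^ (d-i)) := by
        rw [show d+1-i = (d-i)+1 from by omega, pow_succ]
        ring
      have hexp : (i * (N - (d+1)) + Nat.choose (i+1) 2) + i
          = i*(N-d) + Nat.choose (i+1) 2 := by
        have h2 : N - d = (N - (d+1)) + 1 := by omega
        rw [h2]; ring_nf
      rw [hf]
      simp only []
      rw [hsign, ← hexp, pow_add]
      ring
    rw [Finset.sum_congr rfl e1, Finset.sum_congr rfl e2]
    rw [← Finset.sum_mul, Finset.sum_neg_distrib]
    ring

lemma Sc_reflect {q : ℝ} (hq : 1 < q) (n : ℕ) :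
    ∑ l ∈ range (n+1), q ^ (Ee n (n-l)) * gbinom (q^2) n l = pfact q n := by
  have hx : (1:ℝ) < q^2 := by nlinarith
  have h1 : ∀ l ∈ range (n+1), q ^ (Ee n (n-l)) * gbinom (q^2) n l
      = q ^ (Ee n (n-l)) * gbinom (q^2) n (n-l) := by
    intro l hl
    rw [gbinom_symm hx (Nat.lt_succ_iff.mp (mem_range.mp hl))]
  rw [Finset.sum_congr rfl h1]
  have h2 := Finset.sum_range_reflect (fun l => q ^ (Ee n l) * gbinom (q^2) n l) (n+1)
  have h3 : ∑ l ∈ range (n+1), q ^ (Ee n (n-l)) * gbinom (q^2) n (n-l)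
      = ∑ l ∈ range (n+1), (fun l => q ^ (Ee n l) * gbinom (q^2) n l) (n+1-1-l) := by
    refine Finset.sum_congr rfl fun l _ => ?_
    simp only []
    congr 2 <;> omega
  rw [h3, h2]
  exact Sc_eq hq n

lemma inner_key {q : ℝ} (hq : 1 < q) {m N i : ℕ} (hm1 : 1 ≤ m) (him : i ≤ m) (hmN : m ≤ N) :
    (∑ l ∈ range ((m-i)+1),
      (-1:ℝ)^l * q^(l*(l-1)+(m-l)*(m-l-1)) * gbinom (q^2) m l * ((q^(m-l)-q^l)/(q^m-1)) *
        ((-1:ℝ)^((m-l)-i) * (q^2)^(i*(N-(m-l)) + Nat.choose (i+1) 2) * gbinom (q^2) (m-l) i))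
      * ((q^m - 1) * q^(2*Nat.choose (m-i) 2))
    = (-1:ℝ)^(m-i) * gbinom (q^2) m i *
        (q^(2*i*N + 3*Nat.choose (m-i) 2 + i) - q^(2*i*N + 3*Nat.choose (m-i) 2)) * pfact q (m-i) := by
  have hx : (1:ℝ) < q^2 := by nlinarith
  have hqm1 : q^m - 1 ≠ 0 := pow_sub_one_ne hq m (by omega)
  obtain ⟨c, hc⟩ : ∃ c, N = m + c := ⟨N - m, by omega⟩
  rw [Finset.sum_mul]
  have hterm : ∀ l ∈ range ((m-i)+1),
      ((-1:ℝ)^l * q^(l*(l-1)+(m-l)*(m-l-1)) * gbinom (q^2) m l * ((q^(m-l)-q^l)/(q^m-1)) *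
        ((-1:ℝ)^((m-l)-i) * (q^2)^(i*(N-(m-l)) + Nat.choose (i+1) 2) * gbinom (q^2) (m-l) i))
        * ((q^m - 1) * q^(2*Nat.choose (m-i) 2))
      = (-1:ℝ)^(m-i) * gbinom (q^2) m i *
          (q^(Ee (m-i) ((m-i)-l) + (2*i*N + 3*Nat.choose (m-i) 2 + i)) * gbinom (q^2) (m-i) l
            - q^(Ee (m-i) l + (2*i*N + 3*Nat.choose (m-i) 2)) * gbinom (q^2) (m-i) l) := by
    intro l hl
    have hln : l ≤ m - i := Nat.lt_succ_iff.mp (mem_range.mp hl)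
    obtain ⟨b, hb⟩ : ∃ b, m - i = l + b := ⟨m - i - l, by omega⟩
    have htri : gbinom (q^2) m l * gbinom (q^2) (i+b) i = gbinom (q^2) m i * gbinom (q^2) (l+b) l := by
      have h := trinom hx (show i + l ≤ m by omega)
      rw [show m - l = i + b from by omega, show m - i = l + b from hb] at h
      exact h
    rw [show m - l = i + b from by omega,
        show (i+b) - i = b from by omega,
        show N - (i+b) = l + c from by omega,
        show m - i = l + b from hb,
        show (l+b) - l = b from by omega]
    have hN2 : N = i + l + b + c := by omega
    rw [hN2]
    rw [← X1 i l b c, ← X2 i l b c]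
    have hstep : (-1:ℝ)^l * q^(l*(l-1)+(i+b)*((i+b)-1)) * gbinom (q^2) m l * ((q^(i+b)-q^l)/(q^m-1)) *
        ((-1:ℝ)^b * (q^2)^(i*(l+c) + Nat.choose (i+1) 2) * gbinom (q^2) (i+b) i)
        * ((q^m - 1) * q^(2*Nat.choose (l+b) 2))
        = (-1:ℝ)^l * (-1:ℝ)^b * q^(l*(l-1)+(i+b)*((i+b)-1)) * q^(2*(i*(l+c) + Nat.choose (i+1) 2))
            * q^(2*Nat.choose (l+b) 2) * (q^(i+b)-q^l) * (gbinom (q^2) m l * gbinom (q^2) (i+b) i) := by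
      rw [← pow_mul q 2 (i*(l+c) + Nat.choose (i+1) 2)]
      field_simp
    rw [hstep]
    rw [show ((-1:ℝ))^(l+b) = (-1:ℝ)^l * (-1:ℝ)^b from pow_add (-1) l b]
    linear_combination ((-1:ℝ)^l * (-1:ℝ)^b * q^(l*(l-1)+(i+b)*((i+b)-1)) * q^(2*(i*(l+c) + Nat.choose (i+1) 2))
            * q^(2*Nat.choose (l+b) 2) * (q^(i+b)-q^l)) * htri
  rw [Finset.sum_congr rfl hterm]
  have hsplit : ∀ l ∈ range ((m-i)+1),
      (-1:ℝ)^(m-i) * gbinom (q^2) m i *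
          (q^(Ee (m-i) ((m-i)-l) + (2*i*N + 3*Nat.choose (m-i) 2 + i)) * gbinom (q^2) (m-i) l
            - q^(Ee (m-i) l + (2*i*N + 3*Nat.choose (m-i) 2)) * gbinom (q^2) (m-i) l)
      = ((-1:ℝ)^(m-i) * gbinom (q^2) m i * q^(2*i*N + 3*Nat.choose (m-i) 2 + i))
          * (q^(Ee (m-i) ((m-i)-l)) * gbinom (q^2) (m-i) l)
        - ((-1:ℝ)^(m-i) * gbinom (q^2) m i * q^(2*i*N + 3*Nat.choose (m-i) 2))
          * (q^(Ee (m-i) l) * gbinom (q^2) (m-i) l) := by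
    intro l _
    rw [pow_add, pow_add]
    ring
  rw [Finset.sum_congr rfl hsplit, Finset.sum_sub_distrib, ← Finset.mul_sum, ← Finset.mul_sum]
  rw [Sc_reflect hq (m-i)]
  rw [show (∑ l ∈ range ((m-i)+1), q^(Ee (m-i) l) * gbinom (q^2) (m-i) l) = Sc q (m-i) from rfl,
      Sc_eq hq (m-i)]
  ring

theorem stmt7 (q : ℝ) (hq : 1 < q) (m N : ℕ) (hm : 1 ≤ m) (hmN : m ≤ N) :
    ∑ i ∈ Finset.Icc 1 m,
      (-1 : ℝ) ^ (m - i) * q ^ ((m - i) * (m - i - 1) / 2) * gbinom q (m - 1) (i - 1) *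
        (∏ j ∈ Finset.Icc (i + 1) m, (q ^ j + 1)) * q ^ (2 * i * N) =
    ∑ ℓ ∈ Finset.range (m + 1),
      (-1 : ℝ) ^ ℓ * q ^ (ℓ * (ℓ - 1) + (m - ℓ) * (m - ℓ - 1)) * gbinom (q ^ 2) m ℓ *
        ((q ^ (m - ℓ) - q ^ ℓ) / (q ^ m - 1)) *
        ∏ j ∈ Finset.range (m - ℓ), (q ^ (2 * (N - j)) - 1) := by
  have hq0 : (0:ℝ) < q := lt_trans one_pos hq
  have hx : (1:ℝ) < q^2 := by nlinarith
  have hqm1 : q^m - 1 ≠ 0 := pow_sub_one_ne hq m hm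
  symm
  have hprod : ∀ ℓ ∈ range (m+1),
      (-1:ℝ)^ℓ * q^(ℓ*(ℓ-1)+(m-ℓ)*(m-ℓ-1)) * gbinom (q^2) m ℓ * ((q^(m-ℓ)-q^ℓ)/(q^m-1)) *
        ∏ j ∈ range (m-ℓ), (q^(2*(N-j)) - 1)
      = ∑ i ∈ range ((m-ℓ)+1),
          (-1:ℝ)^ℓ * q^(ℓ*(ℓ-1)+(m-ℓ)*(m-ℓ-1)) * gbinom (q^2) m ℓ * ((q^(m-ℓ)-q^ℓ)/(q^m-1)) *
            ((-1:ℝ)^((m-ℓ)-i) * (q^2)^(i*(N-(m-ℓ)) + Nat.choose (i+1) 2) * gbinom (q^2) (m-ℓ) i) := by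
    intro ℓ _
    rw [show (∏ j ∈ range (m-ℓ), (q^(2*(N-j)) - 1)) = ∏ j ∈ range (m-ℓ), ((q^2)^(N-j) - 1) from
        Finset.prod_congr rfl fun j _ => by rw [pow_mul],
      prodB hx N (m-ℓ) (le_trans (Nat.sub_le m ℓ) hmN), Finset.mul_sum]
  rw [Finset.sum_congr rfl hprod]
  rw [Finset.sum_comm' (t' := range (m+1)) (s' := fun i => range ((m-i)+1)) (fun x y => by
    simp only [mem_range]
    omega)]
  have hC : ∀ i : ℕ, ((q^m - 1) * q^(2*Nat.choose (m-i) 2)) ≠ 0 :=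
    fun i => mul_ne_zero hqm1 (pow_ne_zero _ (by positivity))
  have hzero : (∑ l ∈ range ((m-0)+1),
      (-1:ℝ)^l * q^(l*(l-1)+(m-l)*(m-l-1)) * gbinom (q^2) m l * ((q^(m-l)-q^l)/(q^m-1)) *
        ((-1:ℝ)^((m-l)-0) * (q^2)^(0*(N-(m-l)) + Nat.choose (0+1) 2) * gbinom (q^2) (m-l) 0)) = 0 := by
    have key := inner_key hq (i := 0) hm (by omega) hmN
    have hr : (-1:ℝ)^(m-0) * gbinom (q^2) m 0 *
        (q^(2*0*N + 3*Nat.choose (m-0) 2 + 0) - q^(2*0*N + 3*Nat.choose (m-0) 2)) * pfact q (m-0) = 0 := by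
      norm_num
    rw [hr] at key
    rcases mul_eq_zero.mp key with h | h
    · exact h
    · exact absurd h (hC 0)
  have hinner : ∀ i ∈ Icc 1 m,
      (∑ l ∈ range ((m-i)+1),
        (-1:ℝ)^l * q^(l*(l-1)+(m-l)*(m-l-1)) * gbinom (q^2) m l * ((q^(m-l)-q^l)/(q^m-1)) *
          ((-1:ℝ)^((m-l)-i) * (q^2)^(i*(N-(m-l)) + Nat.choose (i+1) 2) * gbinom (q^2) (m-l) i))
      = (-1:ℝ)^(m-i) * q^((m-i)*(m-i-1)/2) * gbinom q (m-1) (i-1) *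
          (∏ j ∈ Icc (i+1) m, (q^j + 1)) * q^(2*i*N) := by
    intro i hi
    have hi1 : 1 ≤ i := (mem_Icc.mp hi).1
    have him : i ≤ m := (mem_Icc.mp hi).2
    have key := inner_key hq (i := i) hm him hmN
    have htarget : ((-1:ℝ)^(m-i) * q^((m-i)*(m-i-1)/2) * gbinom q (m-1) (i-1) *
          (∏ j ∈ Icc (i+1) m, (q^j + 1)) * q^(2*i*N)) * ((q^m - 1) * q^(2*Nat.choose (m-i) 2))
        = (-1:ℝ)^(m-i) * gbinom (q^2) m i *
            (q^(2*i*N + 3*Nat.choose (m-i) 2 + i) - q^(2*i*N + 3*Nat.choose (m-i) 2)) * pfact q (m-i) := by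
      rw [show (m-i)*(m-i-1)/2 = Nat.choose (m-i) 2 from (Nat.choose_two_right (m-i)).symm]
      calc ((-1:ℝ)^(m-i) * q^(Nat.choose (m-i) 2) * gbinom q (m-1) (i-1) *
              (∏ j ∈ Icc (i+1) m, (q^j + 1)) * q^(2*i*N)) * ((q^m - 1) * q^(2*Nat.choose (m-i) 2))
          = (-1:ℝ)^(m-i) * q^(Nat.choose (m-i) 2) * q^(2*Nat.choose (m-i) 2) * q^(2*i*N) *
              ((q^m - 1) * gbinom q (m-1) (i-1) * ∏ j ∈ Icc (i+1) m, (q^j + 1)) := by ring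
        _ = (-1:ℝ)^(m-i) * q^(Nat.choose (m-i) 2) * q^(2*Nat.choose (m-i) 2) * q^(2*i*N) *
              (gbinom (q^2) m i * (q^i - 1) * pfact q (m-i)) := by rw [← star hq hi1 him]
        _ = _ := by ring
    exact mul_right_cancel₀ (hC i) (key.trans htarget.symm)
  rw [Finset.sum_eq_sum_sdiff_singleton_add (show (0:ℕ) ∈ range (m+1) from by simp)]
  rw [show range (m+1) \ {0} = Icc 1 m from by ext x; simp [mem_Icc]; omega]
  rw [hzero, add_zero]
  exact Finset.sum_congr rfl hinner
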